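/- arXiv:1312.1269 — 3 statements merged into one kernel-verified Lean document; each statement's English description precedes it below -/
import Mathlib

section
/- In the category of topological spaces, the pushout of a topological embedding along an arbitrary continuous map is again a topological embedding. That is, if i : C → B is an injective continuous map which is an embedding (C carries the topology induced from B) and s : C → A is any continuous map, then the induced map A → A ⊔_C B to the pushout is an embedding. -/
open CategoryTheory Limits

universe u

namespace PushoutAux

variable {A B C : Type u} (s : C → A) (i : C → B)

inductive Rel : A ⊕ B → A ⊕ B → Prop
  | mk (c : C) : Rel (Sum.inl (s c)) (Sum.inr (i c))

open scoped Classical in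
/-- normal form -/
noncomputable def nf : A ⊕ B → A ⊕ B
  | .inl a => .inl a
  | .inr b => if h : ∃ c, i c = b then .inl (s h.choose) else .inr b

variable {i}

lemma nf_rel (hinj : Function.Injective i) : ∀ x y, Rel s i x y → nf s i x = nf s i y := by
  rintro _ _ ⟨c⟩
  have h : ∃ c', i c' = i c := ⟨c, rfl⟩
  simp only [nf, dif_pos h, hinj h.choose_spec]

lemma mk_nf (x : A ⊕ B) : Quot.mk (Rel s i) (nf s i x) = Quot.mk _ x := by
  cases x with
  | inl a => rfl
  | inr b =>
    simp only [nf]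
    split_ifs with h
    · conv_rhs => rw [← h.choose_spec]
      exact Quot.sound (Rel.mk h.choose)
    · rfl

lemma mk_eq_iff (hinj : Function.Injective i) (x y : A ⊕ B) :
    Quot.mk (Rel s i) x = Quot.mk _ y ↔ nf s i x = nf s i y := by
  constructor
  · intro h
    exact congrArg (Quot.lift (nf s i) (nf_rel s hinj)) h
  · intro h
    rw [← mk_nf s x, ← mk_nf s y, h]

lemma inl_injective (hinj : Function.Injective i) : Function.Injective (fun a : A => Quot.mk (Rel s i) (Sum.inl a)) := by
  intro a a' h
  have := (mk_eq_iff s hinj _ _).mp h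
  simpa [nf] using this

section Top

variable [TopologicalSpace A] [TopologicalSpace B] [TopologicalSpace C]

lemma isEmbedding_inl (hs : Continuous s) (hi : Topology.IsEmbedding i) :
    Topology.IsEmbedding (fun a : A => Quot.mk (Rel s i) (Sum.inl a)) := by
  have hinj := hi.injective
  have hcont : Continuous (fun a : A => Quot.mk (Rel s i) (Sum.inl a)) :=
    continuous_quot_mk.comp continuous_inl
  refine ⟨⟨le_antisymm (continuous_iff_le_induced.mp hcont) ?_⟩, inl_injective s hinj⟩
  rw [TopologicalSpace.le_def]
  intro U hU
  rw [isOpen_induced_iff]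
  -- get V₀ open in B with i ⁻¹' V₀ = s ⁻¹' U
  obtain ⟨V₀, hV₀, hV₀eq⟩ := hi.isInducing.isOpen_iff.mp (hU.preimage hs)
  set S₀ : Set (A ⊕ B) := Sum.inl '' U ∪ Sum.inr '' V₀ with hS₀
  have key : ∀ c : C, s c ∈ U ↔ i c ∈ V₀ := fun c => by
    rw [← Set.mem_preimage, ← Set.mem_preimage, hV₀eq]
  have hsat : Quot.mk (Rel s i) ⁻¹' (Quot.mk (Rel s i) '' S₀) = S₀ := by
    ext x
    simp only [Set.mem_preimage, Set.mem_image]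
    constructor
    · rintro ⟨y, hy, hxy⟩
      have hnf := (mk_eq_iff s hinj y x).mp hxy
      rcases hy with ⟨a, haU, rfl⟩ | ⟨b, hbV, rfl⟩
      · -- y = inl a, a ∈ U
        cases x with
        | inl a' =>
          simp only [nf, Sum.inl.injEq] at hnf
          exact Or.inl ⟨a, haU, by rw [hnf]⟩
        | inr b =>
          by_cases h : ∃ c, i c = b
          · rw [show nf s i (Sum.inr b) = Sum.inl (s h.choose) from dif_pos h] at hnf
            simp only [nf, Sum.inl.injEq] at hnf
            have h1 : s h.choose ∈ U := hnf ▸ haU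
            have h2 : b ∈ V₀ := by rw [← h.choose_spec]; exact (key _).mp h1
            exact Or.inr ⟨b, h2, rfl⟩
          · rw [show nf s i (Sum.inr b) = Sum.inr b from dif_neg h] at hnf
            simp only [nf] at hnf
            exact absurd hnf (by simp)
      · -- y = inr b, b ∈ V₀
        have hb : nf s i (Sum.inr b) = nf s i (Sum.inr b) := rfl
        cases x with
        | inl a =>
          by_cases h : ∃ c, i c = b
          · rw [show nf s i (Sum.inr b) = Sum.inl (s h.choose) from dif_pos h] at hnf
            simp only [nf, Sum.inl.injEq] at hnf
            have h1 : i h.choose ∈ V₀ := by rw [h.choose_spec]; exact hbV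
            have h2 : s h.choose ∈ U := (key _).mpr h1
            exact Or.inl ⟨a, hnf ▸ h2, rfl⟩
          · rw [show nf s i (Sum.inr b) = Sum.inr b from dif_neg h] at hnf
            simp only [nf] at hnf
            exact absurd hnf (by simp)
        | inr b' =>
          by_cases h : ∃ c, i c = b
          · rw [show nf s i (Sum.inr b) = Sum.inl (s h.choose) from dif_pos h] at hnf
            by_cases h' : ∃ c, i c = b'
            · rw [show nf s i (Sum.inr b') = Sum.inl (s h'.choose) from dif_pos h',
                Sum.inl.injEq] at hnf
              have h1 : i h.choose ∈ V₀ := by rw [h.choose_spec]; exact hbV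
              have h2 : s h'.choose ∈ U := hnf ▸ (key _).mpr h1
              have h3 : b' ∈ V₀ := by rw [← h'.choose_spec]; exact (key _).mp h2
              exact Or.inr ⟨b', h3, rfl⟩
            · rw [show nf s i (Sum.inr b') = Sum.inr b' from dif_neg h'] at hnf
              simp at hnf
          · rw [show nf s i (Sum.inr b) = Sum.inr b from dif_neg h] at hnf
            by_cases h' : ∃ c, i c = b'
            · rw [show nf s i (Sum.inr b') = Sum.inl (s h'.choose) from dif_pos h'] at hnf
              simp at hnf
            · rw [show nf s i (Sum.inr b') = Sum.inr b' from dif_neg h',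
                Sum.inr.injEq] at hnf
              exact Or.inr ⟨b', hnf ▸ hbV, rfl⟩
    · intro hx
      exact ⟨x, hx, rfl⟩
  refine ⟨Quot.mk (Rel s i) '' S₀, ?_, ?_⟩
  · rw [isOpen_coinduced]
    show IsOpen (Quot.mk (Rel s i) ⁻¹' (Quot.mk (Rel s i) '' S₀))
    rw [hsat]
    exact (isOpenMap_inl U hU).union (isOpenMap_inr V₀ hV₀)
  · ext a
    have : (Quot.mk (Rel s i) (Sum.inl a) ∈ Quot.mk (Rel s i) '' S₀) ↔ Sum.inl a ∈ S₀ := by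
      rw [← Set.mem_preimage, hsat]
    simp only [Set.mem_preimage, this]
    simp only [hS₀, Set.mem_union, Set.mem_image]
    constructor
    · rintro (⟨a', ha', h⟩ | ⟨b, _, h⟩)
      · cases h; exact ha'
      · cases h
    · intro ha
      exact Or.inl ⟨a, ha, rfl⟩

end Top
end PushoutAux

/-- In the category of topological spaces, the pushout of a topological embedding along an
arbitrary continuous map is again a topological embedding: if `i : C ⟶ B` is an embedding
and `s : C ⟶ A` is any continuous map, then the induced map `A ⟶ A ⊔_C B` into the pushout
is an embedding. -/
theorem stmt4 {A B C : TopCat.{u}} (i : C ⟶ B) (s : C ⟶ A)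
    (hi : Topology.IsEmbedding i) :
    Topology.IsEmbedding (pushout.inl s i : A ⟶ pushout s i) := by
  let P : TopCat.{u} := TopCat.of (Quot (PushoutAux.Rel (s : C → A) (i : C → B)))
  let inlP : A ⟶ P := TopCat.ofHom ⟨fun a => Quot.mk _ (Sum.inl a), continuous_quot_mk.comp continuous_inl⟩
  let inrP : B ⟶ P := TopCat.ofHom ⟨fun b => Quot.mk _ (Sum.inr b), continuous_quot_mk.comp continuous_inr⟩
  have hcomm : s ≫ inlP = i ≫ inrP := by
    ext c
    exact Quot.sound (PushoutAux.Rel.mk (s := (s : C → A)) (i := (i : C → B)) c)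
  let coc : PushoutCocone s i := PushoutCocone.mk inlP inrP hcomm
  let iscolim : IsColimit coc := PushoutCocone.IsColimit.mk _
    (fun t => TopCat.ofHom ⟨Quot.lift (Sum.elim t.inl t.inr)
        (by rintro _ _ ⟨c⟩; exact ConcreteCategory.congr_hom t.condition c),
      continuous_quot_lift _ (t.inl.hom.continuous.sumElim t.inr.hom.continuous)⟩)
    (fun t => rfl) (fun t => rfl)
    (fun t m h₁ h₂ => by
      ext ⟨x | x⟩
      · exact ConcreteCategory.congr_hom h₁ x
      · exact ConcreteCategory.congr_hom h₂ x)
  let e : P ≅ pushout s i := iscolim.coconePointUniqueUpToIso (colimit.isColimit (span s i))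
  have h1 : inlP ≫ e.hom = pushout.inl s i :=
    iscolim.comp_coconePointUniqueUpToIso_hom (colimit.isColimit (span s i)) WalkingSpan.left
  rw [← h1]
  have : ⇑(inlP ≫ e.hom) = ⇑e.hom ∘ ⇑inlP := rfl
  rw [this]
  exact (TopCat.homeoOfIso e).isEmbedding.comp
    (PushoutAux.isEmbedding_inl (s : C → A) s.hom.continuous hi)
end

section
/- Topological embeddings are closed under transfinite composition: if X₀ → X₁ → X₂ → ⋯ is a λ-sequence of topological spaces in which each map X_β → X_{β+1} is an embedding (and at limit ordinals the space is the colimit of the preceding ones), then the canonical map X₀ → colim_β X_β is an embedding. -/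
open CategoryTheory Limits

variable {J : Type u} [LinearOrder J]

/-- The inclusion functor `Set.Iio j ⥤ J`. -/
def iioIncl (j : J) : (Set.Iio j : Set J) ⥤ J :=
  (Subtype.mono_coe (· ∈ Set.Iio j)).functor

/-- For `F : J ⥤ Top` and `j : J`, the canonical cocone with point `F.obj j` over the
restriction of `F` to the elements below `j`. -/
def coconeBelow (F : J ⥤ TopCat.{u}) (j : J) : Cocone (iioIncl j ⋙ F) where
  pt := F.obj j
  ι :=
    { app := fun i => F.map (homOfLE i.2.le)
      naturality := by
        intro i k f
        dsimp [iioIncl, Monotone.functor]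
        rw [← F.map_comp, Category.comp_id]
        congr 1 }

universe u

open Topology

namespace Stmt5Aux

lemma isOpen_of_isColimit {K : Type u} [Category.{u} K] {G : K ⥤ TopCat.{u}}
    (c : Cocone G) (hc : IsColimit c) (V : Set c.pt)
    (hV : ∀ k, IsOpen (c.ι.app k ⁻¹' V)) : IsOpen V := by
  exact (TopCat.isOpen_iff_of_isColimit c hc V).mpr hV

open Classical in
/-- Extend an open set along an embedding; for non-open sets just take the image. -/
noncomputable def extOpen {X Y : TopCat.{u}} (f : X ⟶ Y) (hf : IsEmbedding f) (U : Set X) :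
    Set Y :=
  if h : IsOpen U then (hf.isInducing.isOpen_iff.mp h).choose else ⇑f '' U

open Classical in
lemma preimage_extOpen {X Y : TopCat.{u}} (f : X ⟶ Y) (hf : IsEmbedding f) (U : Set X) :
    ⇑f ⁻¹' extOpen f hf U = U := by
  rw [extOpen]
  split
  · next h => exact (hf.isInducing.isOpen_iff.mp h).choose_spec.2
  · exact Set.preimage_image_eq U hf.injective

open Classical in
lemma isOpen_extOpen {X Y : TopCat.{u}} (f : X ⟶ Y) (hf : IsEmbedding f) (U : Set X)
    (hU : IsOpen U) : IsOpen (extOpen f hf U) := by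
  rw [extOpen, dif_pos hU]
  exact (hf.isInducing.isOpen_iff.mp hU).choose_spec.1

lemma inducing_of_exists {X Y : TopCat.{u}} (f : X ⟶ Y)
    (h : ∀ U : Set X, IsOpen U → ∃ V : Set Y, IsOpen V ∧ ⇑f ⁻¹' V = U) :
    IsInducing f := by
  constructor
  apply le_antisymm
  · exact continuous_iff_le_induced.mp f.hom.continuous
  · rw [TopologicalSpace.le_def]
    intro U hU
    obtain ⟨V, hV, rfl⟩ := h U hU
    exact isOpen_induced_iff.mpr ⟨V, hV, rfl⟩

section Generic

variable {K : Type u} [LinearOrder K] [Nonempty K] {G : K ⥤ TopCat.{u}}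
  {c : Cocone G}

lemma hom_eq_homOfLE {a b : K} (f : a ⟶ b) : f = homOfLE (leOfHom f) :=
  Subsingleton.elim _ _

lemma leg_injective (hc : IsColimit c)
    (hinj : ∀ (a b : K) (hab : a ≤ b), Function.Injective (G.map (homOfLE hab)))
    (k : K) : Function.Injective (c.ι.app k) := by
  intro x y hxy
  have h : ((forget TopCat).mapCocone c).ι.app k x = ((forget TopCat).mapCocone c).ι.app k y := hxy
  obtain ⟨l, f, g, hfg⟩ :=
    (Types.FilteredColimit.isColimit_eq_iff (G ⋙ forget TopCat)
      (isColimitOfPreserves (forget TopCat) hc)).mp h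
  have hfg' : G.map f x = G.map g y := hfg
  rw [hom_eq_homOfLE f, hom_eq_homOfLE g] at hfg'
  have : (homOfLE (leOfHom f) : k ⟶ l) = homOfLE (leOfHom g) := Subsingleton.elim _ _
  rw [this] at hfg'
  exact hinj k l (leOfHom g) hfg'

lemma preimage_iUnion_eq (hc : IsColimit c)
    (W : ∀ k, Set (G.obj k))
    (hcompat : ∀ (a b : K) (hab : a ≤ b), G.map (homOfLE hab) ⁻¹' W b = W a)
    (k : K) : c.ι.app k ⁻¹' (⋃ l, c.ι.app l '' W l) = W k := by
  ext x
  simp only [Set.mem_preimage, Set.mem_iUnion, Set.mem_image]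
  constructor
  · rintro ⟨l, y, hy, hxy⟩
    have h : ((forget TopCat).mapCocone c).ι.app l y = ((forget TopCat).mapCocone c).ι.app k x :=
      hxy
    obtain ⟨m, f, g, hfg⟩ :=
      (Types.FilteredColimit.isColimit_eq_iff (G ⋙ forget TopCat)
        (isColimitOfPreserves (forget TopCat) hc)).mp h
    have hfg' : G.map f y = G.map g x := hfg
    have h1 : G.map f y ∈ W m := by
      rw [hom_eq_homOfLE f] at hfg' ⊢
      have := hcompat l m (leOfHom f)
      rw [← this] at hy
      exact hy
    rw [hfg'] at h1
    rw [hom_eq_homOfLE g] at h1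
    rw [← hcompat k m (leOfHom g)]
    exact h1
  · intro hx
    exact ⟨k, x, hx, rfl⟩

lemma isOpen_iUnion_of (hc : IsColimit c)
    (W : ∀ k, Set (G.obj k))
    (hcompat : ∀ (a b : K) (hab : a ≤ b), G.map (homOfLE hab) ⁻¹' W b = W a)
    (hopen : ∀ k, IsOpen (W k)) : IsOpen (⋃ l, c.ι.app l '' W l : Set c.pt) := by
  refine isOpen_of_isColimit c hc (⋃ l, c.ι.app l '' W l) fun k => ?_
  rw [preimage_iUnion_eq hc W hcompat k]
  exact hopen k

end Generic

section Main

variable [SuccOrder J] [WellFoundedLT J]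

lemma embCovby (F : J ⥤ TopCat.{u})
    (hsucc : ∀ j : J, ¬ IsMax j → IsEmbedding (F.map (homOfLE (Order.le_succ j))))
    {i j : J} (hij : i ⋖ j) : IsEmbedding (F.map (homOfLE hij.le)) := by
  have h1 : ¬ IsMax i := hij.lt.not_isMax
  have h2 : Order.succ i = j := CovBy.succ_eq hij
  subst h2
  exact hsucc i h1

lemma exists_covby {j : J} (h1 : ¬ IsMin j) (h2 : ¬ Order.IsSuccLimit j) : ∃ k, k ⋖ j := by
  rw [← Order.not_isSuccPrelimit_iff_exists_covBy]
  intro h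
  exact h2 ⟨h1, h⟩

lemma not_isMin_of_not_le {i0 j : J} (h : ¬ j ≤ i0) : ¬ IsMin j := fun hm => h (hm.isBot i0)

variable (F : J ⥤ TopCat.{u})
  (hsucc : ∀ j : J, ¬ IsMax j → IsEmbedding (F.map (homOfLE (Order.le_succ j))))

open Classical in
/-- Transfinite extension of a set along the sequence. -/
noncomputable def extFam (i0 : J) (U : Set (F.obj i0)) : ∀ j : J, Set (F.obj j) :=
  wellFounded_lt.fix fun j IH =>
    if h : j ≤ i0 then F.map (homOfLE h) ⁻¹' U
    else if hl : Order.IsSuccLimit j then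
      ⋃ k : Set.Iio j, F.map (homOfLE k.2.le) '' IH k k.2
    else
      extOpen (F.map (homOfLE (exists_covby (not_isMin_of_not_le h) hl).choose_spec.le))
        (embCovby F hsucc (exists_covby (not_isMin_of_not_le h) hl).choose_spec)
        (IH _ (exists_covby (not_isMin_of_not_le h) hl).choose_spec.lt)

open Classical in
lemma extFam_eq (i0 : J) (U : Set (F.obj i0)) (j : J) :
    extFam F hsucc i0 U j =
      if h : j ≤ i0 then F.map (homOfLE h) ⁻¹' U
      else if hl : Order.IsSuccLimit j then
        ⋃ k : Set.Iio j, F.map (homOfLE k.2.le) '' extFam F hsucc i0 U k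
      else
        extOpen (F.map (homOfLE (exists_covby (not_isMin_of_not_le h) hl).choose_spec.le))
          (embCovby F hsucc (exists_covby (not_isMin_of_not_le h) hl).choose_spec)
          (extFam F hsucc i0 U (exists_covby (not_isMin_of_not_le h) hl).choose) := by
  rw [extFam, WellFounded.fix_eq]

lemma extFam_of_le (i0 : J) (U : Set (F.obj i0)) {j : J} (h : j ≤ i0) :
    extFam F hsucc i0 U j = F.map (homOfLE h) ⁻¹' U := by
  rw [extFam_eq, dif_pos h]

lemma extFam_self (i0 : J) (U : Set (F.obj i0)) : extFam F hsucc i0 U i0 = U := by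
  rw [extFam_of_le F hsucc i0 U le_rfl]
  have h1 : (homOfLE (le_refl i0) : i0 ⟶ i0) = 𝟙 i0 := rfl
  rw [h1, F.map_id]
  rfl

lemma extFam_of_limit (i0 : J) (U : Set (F.obj i0)) {j : J} (h : ¬ j ≤ i0)
    (hl : Order.IsSuccLimit j) :
    extFam F hsucc i0 U j = ⋃ k : Set.Iio j, F.map (homOfLE k.2.le) '' extFam F hsucc i0 U k := by
  rw [extFam_eq, dif_neg h, dif_pos hl]

lemma extFam_succ (i0 : J) (U : Set (F.obj i0)) {j : J} (h : ¬ j ≤ i0)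
    (hl : ¬ Order.IsSuccLimit j) :
    ∃ (k : J) (hk : k ⋖ j),
      extFam F hsucc i0 U j =
        extOpen (F.map (homOfLE hk.le)) (embCovby F hsucc hk) (extFam F hsucc i0 U k) := by
  refine ⟨_, (exists_covby (not_isMin_of_not_le h) hl).choose_spec, ?_⟩
  rw [extFam_eq, dif_neg h, dif_neg hl]

end Main

section Grand

variable [SuccOrder J] [WellFoundedLT J]

set_option maxHeartbeats 1000000 in
lemma grand (F : J ⥤ TopCat.{u})
    (hsucc : ∀ j : J, ¬ IsMax j → IsEmbedding (F.map (homOfLE (Order.le_succ j))))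
    (hlim : ∀ j : J, Order.IsSuccLimit j → Nonempty (IsColimit (coconeBelow F j)))
    (j : J) :
    (∀ i (h : i ≤ j), IsEmbedding (F.map (homOfLE h))) ∧
    (∀ (i0 : J) (U : Set (F.obj i0)),
      (∀ i (h : i ≤ j),
        F.map (homOfLE h) ⁻¹' extFam F hsucc i0 U j = extFam F hsucc i0 U i) ∧
      (IsOpen U → IsOpen (extFam F hsucc i0 U j))) := by
  induction j using WellFoundedLT.induction with
  | _ j IH =>
  have hid : ∀ {a : J} (S : Set (F.obj a)), F.map (homOfLE (le_refl a)) ⁻¹' S = S := by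
    intro a S
    have h1 : (homOfLE (le_refl a) : a ⟶ a) = 𝟙 a := rfl
    rw [h1, F.map_id]
    rfl
  have mapfac : ∀ {a b c' : J} (h1 : a ≤ b) (h2 : b ≤ c') (h : a ≤ c'),
      (F.map (homOfLE h)) = F.map (homOfLE h1) ≫ F.map (homOfLE h2) := by
    intro a b c' h1 h2 h
    rw [← F.map_comp, homOfLE_comp]
  by_cases hlj : Order.IsSuccLimit j
  · -- limit case
    obtain ⟨hcol⟩ := hlim j hlj
    haveI : Nonempty (Set.Iio j : Set J) := by
      obtain ⟨b, hb⟩ := not_isMin_iff.mp hlj.not_isMin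
      exact ⟨⟨b, hb⟩⟩
    have hGmap : ∀ (a b : (Set.Iio j : Set J)) (hab : a ≤ b),
        ((iioIncl j ⋙ F).map (homOfLE hab)) =
          F.map (homOfLE (Subtype.coe_le_coe.mpr hab)) := fun a b hab => rfl
    have hcompatlow : ∀ (i0 : J) (U : Set (F.obj i0)) (a b : (Set.Iio j : Set J)) (hab : a ≤ b),
        (iioIncl j ⋙ F).map (homOfLE hab) ⁻¹' extFam F hsucc i0 U b.1 =
          extFam F hsucc i0 U a.1 := by
      intro i0 U a b hab
      rw [hGmap]
      exact ((IH b b.2).2 i0 U).1 a.1 (Subtype.coe_le_coe.mpr hab)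
    have hfamj : ∀ (i0 : J) (U : Set (F.obj i0)),
        (∀ i (h : i ≤ j),
          F.map (homOfLE h) ⁻¹' extFam F hsucc i0 U j = extFam F hsucc i0 U i) ∧
        (IsOpen U → IsOpen (extFam F hsucc i0 U j)) := by
      intro i0 U
      by_cases h0 : j ≤ i0
      · constructor
        · intro i h
          rcases h.lt_or_eq with hlt | rfl
          · rw [extFam_of_le F hsucc i0 U h0, extFam_of_le F hsucc i0 U (h.trans h0),
              mapfac h h0 (h.trans h0)]
            rfl
          · exact hid _
        · intro hU
          rw [extFam_of_le F hsucc i0 U h0]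
          exact hU.preimage (F.map (homOfLE h0)).hom.continuous
      · have hVeq : extFam F hsucc i0 U j =
            ⋃ k : (Set.Iio j : Set J), (coconeBelow F j).ι.app k '' (extFam F hsucc i0 U k.1) := by
          rw [extFam_of_limit F hsucc i0 U h0 hlj]
          rfl
        constructor
        · intro i h
          rcases h.lt_or_eq with hlt | rfl
          · rw [hVeq]
            exact preimage_iUnion_eq hcol (fun k => extFam F hsucc i0 U k.1)
              (hcompatlow i0 U) ⟨i, hlt⟩
          · exact hid _
        · intro hU
          rw [hVeq]
          exact isOpen_iUnion_of hcol (fun k => extFam F hsucc i0 U k.1)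
            (hcompatlow i0 U) (fun k => ((IH k.1 k.2).2 i0 U).2 hU)
    refine ⟨?_, hfamj⟩
    intro i h
    rcases h.lt_or_eq with hlt | rfl
    · refine ⟨inducing_of_exists _ ?_, ?_⟩
      · intro U hU
        refine ⟨extFam F hsucc i U j, (hfamj i U).2 hU, ?_⟩
        rw [(hfamj i U).1 i h, extFam_self]
      · exact leg_injective hcol
          (fun a b hab => by
            rw [hGmap]
            exact ((IH b b.2).1 a.1 (Subtype.coe_le_coe.mpr hab)).injective) ⟨i, hlt⟩
    · have h1 : F.map (homOfLE h) = 𝟙 (F.obj i) := by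
        rw [show (homOfLE h : i ⟶ i) = 𝟙 i from rfl, F.map_id]
      rw [h1, TopCat.coe_id]
      exact Topology.IsEmbedding.id
  · -- successor (or bottom relative to i0) case
    have hfamj : ∀ (i0 : J) (U : Set (F.obj i0)),
        (∀ i (h : i ≤ j),
          F.map (homOfLE h) ⁻¹' extFam F hsucc i0 U j = extFam F hsucc i0 U i) ∧
        (IsOpen U → IsOpen (extFam F hsucc i0 U j)) := by
      intro i0 U
      by_cases h0 : j ≤ i0
      · constructor
        · intro i h
          rcases h.lt_or_eq with hlt | rfl
          · rw [extFam_of_le F hsucc i0 U h0, extFam_of_le F hsucc i0 U (h.trans h0),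
              mapfac h h0 (h.trans h0)]
            rfl
          · exact hid _
        · intro hU
          rw [extFam_of_le F hsucc i0 U h0]
          exact hU.preimage (F.map (homOfLE h0)).hom.continuous
      · obtain ⟨k, hk, hEq⟩ := extFam_succ F hsucc i0 U h0 hlj
        constructor
        · intro i h
          rcases h.lt_or_eq with hlt | rfl
          · have hik : i ≤ k := le_of_not_gt fun hki => absurd hlt (hk.2 hki)
            rw [hEq, mapfac hik hk.le h]
            have h1 := preimage_extOpen (F.map (homOfLE hk.le)) (embCovby F hsucc hk)
              (extFam F hsucc i0 U k)
            show ⇑(F.map (homOfLE hik)) ⁻¹' (⇑(F.map (homOfLE hk.le)) ⁻¹'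
              extOpen (F.map (homOfLE hk.le)) (embCovby F hsucc hk)
                (extFam F hsucc i0 U k)) = extFam F hsucc i0 U i
            rw [h1]
            exact ((IH k hk.lt).2 i0 U).1 i hik
          · exact hid _
        · intro hU
          rw [hEq]
          exact isOpen_extOpen _ _ _ (((IH k hk.lt).2 i0 U).2 hU)
    refine ⟨?_, hfamj⟩
    intro i h
    rcases h.lt_or_eq with hlt | rfl
    · have hmin : ¬ IsMin j := not_isMin_iff.mpr ⟨i, hlt⟩
      obtain ⟨k, hk⟩ := exists_covby hmin hlj
      have hik : i ≤ k := le_of_not_gt fun hki => absurd hlt (hk.2 hki)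
      rw [mapfac hik hk.le h, TopCat.coe_comp]
      exact (embCovby F hsucc hk).comp ((IH k hk.lt).1 i hik)
    · have h1 : F.map (homOfLE h) = 𝟙 (F.obj i) := by
        rw [show (homOfLE h : i ⟶ i) = 𝟙 i from rfl, F.map_id]
      rw [h1, TopCat.coe_id]
      exact Topology.IsEmbedding.id

end Grand

end Stmt5Aux

/-- Topological embeddings are closed under transfinite composition: if `F` is a
λ-sequence of topological spaces (indexed by a well-ordered set `J` with bottom element),
i.e. each map `F.obj j ⟶ F.obj (j+1)` is an embedding and at each limit index the space
`F.obj j` is the colimit of the preceding ones, then the canonical map from `F.obj ⊥` to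
the colimit of the whole sequence is an embedding. -/
theorem stmt5 [SuccOrder J] [OrderBot J] [WellFoundedLT J]
    (F : J ⥤ TopCat.{u})
    (hsucc : ∀ j : J, ¬ IsMax j →
      Topology.IsEmbedding (F.map (homOfLE (Order.le_succ j))))
    (hlim : ∀ j : J, Order.IsSuccLimit j → Nonempty (IsColimit (coconeBelow F j)))
    (c : Cocone F) (hc : IsColimit c) :
    Topology.IsEmbedding (c.ι.app ⊥) := by
  haveI : Nonempty J := ⟨⊥⟩
  have grand := Stmt5Aux.grand F hsucc hlim
  refine ⟨Stmt5Aux.inducing_of_exists _ ?_,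
    Stmt5Aux.leg_injective hc (fun a b hab => ((grand b).1 a hab).injective) ⊥⟩
  intro U hU
  refine ⟨⋃ l, c.ι.app l '' (Stmt5Aux.extFam F hsucc ⊥ U l), ?_, ?_⟩
  · exact Stmt5Aux.isOpen_iUnion_of hc _ (fun a b hab => ((grand b).2 ⊥ U).1 a hab)
      (fun l => ((grand l).2 ⊥ U).2 hU)
  · rw [Stmt5Aux.preimage_iUnion_eq hc _ (fun a b hab => ((grand b).2 ⊥ U).1 a hab) ⊥,
      Stmt5Aux.extFam_self]
end

section
/- Let J be a groupoid, let α, β : J → Top be functors, and let η : α ⇒ β be a natural transformation such that η_j : α(j) → β(j) is a topological embedding for every object j of J. Then the induced map colim(α) → colim(β) between colimits is a topological embedding. -/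
open CategoryTheory Limits

section Stmt6Aux

universe u
variable {J : Type u} [Groupoid.{u} J]

theorem stmt6_map_inv_map (F : J ⥤ TopCat.{u}) {i k : J} (g : i ⟶ k) (x : F.obj i) :
    F.map (Groupoid.inv g) (F.map g x) = x := by
  have h1 : F.map g ≫ F.map (Groupoid.inv g) = 𝟙 _ := by
    rw [← F.map_comp, Groupoid.comp_inv, F.map_id]
  have := ConcreteCategory.congr_hom h1 x
  rwa [comp_apply, id_apply] at this

theorem stmt6_map_map_inv (F : J ⥤ TopCat.{u}) {i k : J} (g : i ⟶ k) (x : F.obj k) :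
    F.map g (F.map (Groupoid.inv g) x) = x := by
  have h1 : F.map (Groupoid.inv g) ≫ F.map g = 𝟙 _ := by
    rw [← F.map_comp, Groupoid.inv_comp, F.map_id]
  have := ConcreteCategory.congr_hom h1 x
  rwa [comp_apply, id_apply] at this

/-- In a groupoid, the generating relation of the colimit quotient is already transitive and
symmetric, so `EqvGen` collapses. -/
theorem stmt6_exact (F : J ⥤ Type u) {p q : Σ j, F.obj j}
    (hpq : Relation.EqvGen (Functor.ColimitTypeRel F) p q) : ∃ g : p.1 ⟶ q.1, F.map g p.2 = q.2 := by
  induction hpq with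
  | rel p q hr => obtain ⟨f, hf⟩ := hr; exact ⟨f, hf.symm⟩
  | refl p => exact ⟨𝟙 _, by simp⟩
  | symm p q _ ih =>
    obtain ⟨g, hg⟩ := ih
    refine ⟨Groupoid.inv g, ?_⟩
    rw [← hg, ← types_comp_apply (F.map g) (F.map (Groupoid.inv g)), ← F.map_comp,
      Groupoid.comp_inv, F.map_id]
    rfl
  | trans p q r _ _ ih1 ih2 =>
    obtain ⟨g, hg⟩ := ih1
    obtain ⟨g', hg'⟩ := ih2
    refine ⟨g ≫ g', ?_⟩
    rw [F.map_comp, types_comp_apply, hg, hg']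

theorem stmt6_quot_eq (F : J ⥤ Type u) {j j' : J} {x : F.obj j} {x' : F.obj j'}
    (w : Quot.mk (Functor.ColimitTypeRel F) ⟨j, x⟩ = Quot.mk (Functor.ColimitTypeRel F) ⟨j', x'⟩) :
    ∃ g : j ⟶ j', F.map g x = x' :=
  stmt6_exact F (Quot.eq.1 w)

end Stmt6Aux

/-- Let `J` be a groupoid, `α, β : J ⥤ Top` functors and `η : α ⟶ β` a natural
transformation such that each component `η_j` is a topological embedding.  Then the
induced map `colim α ⟶ colim β` between the colimits is a topological embedding. -/
theorem stmt6 {J : Type u} [Groupoid.{u} J] (α β : J ⥤ TopCat.{u}) (η : α ⟶ β)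
    (h : ∀ j : J, Topology.IsEmbedding (η.app j)) :
    Topology.IsEmbedding (colimMap η : colimit α ⟶ colimit β) := by
  classical
  set cα : Cocone α := TopCat.coconeOfCoconeForget (Types.TypeMax.colimitCocone.{u, u} (α ⋙ forget TopCat)) with hcα
  set cβ : Cocone β := TopCat.coconeOfCoconeForget (Types.TypeMax.colimitCocone.{u, u} (β ⋙ forget TopCat)) with hcβ
  have hcαl : IsColimit cα := TopCat.isColimitCoconeOfForget _ (Types.TypeMax.colimitCoconeIsColimit.{u, u} (α ⋙ forget TopCat))
  have hcβl : IsColimit cβ := TopCat.isColimitCoconeOfForget _ (Types.TypeMax.colimitCoconeIsColimit.{u, u} (β ⋙ forget TopCat))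
  set eα := colimit.isoColimitCocone ⟨cα, hcαl⟩ with heα
  set eβ := colimit.isoColimitCocone ⟨cβ, hcβl⟩ with heβ
  set f : cα.pt ⟶ cβ.pt := hcαl.map cβ η with hfdef
  -- underlying behaviour of `f` and the cocone maps on points
  have hι_mkα : ∀ (j : J) (x : α.obj j),
      cα.ι.app j x = Quot.mk (Functor.ColimitTypeRel (α ⋙ forget TopCat)) ⟨j, x⟩ := fun _ _ => rfl
  have hι_mkβ : ∀ (j : J) (y : β.obj j),
      cβ.ι.app j y = Quot.mk (Functor.ColimitTypeRel (β ⋙ forget TopCat)) ⟨j, y⟩ := fun _ _ => rfl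
  have hf : ∀ (j : J) (x : α.obj j),
      f (Quot.mk (Functor.ColimitTypeRel (α ⋙ forget TopCat)) ⟨j, x⟩)
        = Quot.mk (Functor.ColimitTypeRel (β ⋙ forget TopCat)) ⟨j, η.app j x⟩ := by
    intro j x
    have := ConcreteCategory.congr_hom (hcαl.ι_map cβ η j) x
    simp only [comp_apply] at this
    rw [hι_mkα] at this
    have h2 : (η.app j ≫ cβ.ι.app j) x
        = Quot.mk (Functor.ColimitTypeRel (β ⋙ forget TopCat)) ⟨j, η.app j x⟩ := rfl
    exact this.trans h2
  -- every point of the explicit colimit is a `Quot.mk`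
  have hrepα : ∀ a : cα.pt, ∃ p : Σ j, α.obj j,
      Quot.mk (Functor.ColimitTypeRel (α ⋙ forget TopCat)) p = a := fun a => Quot.exists_rep a
  -- injectivity of f
  have hinj : Function.Injective f := by
    intro a b hab
    obtain ⟨⟨i, x⟩, rfl⟩ := hrepα a
    obtain ⟨⟨j, y⟩, rfl⟩ := hrepα b
    rw [hf, hf] at hab
    obtain ⟨g, hg⟩ := stmt6_quot_eq (β ⋙ forget TopCat) hab
    have hnat : η.app j (α.map g x) = β.map g (η.app i x) := by
      have := ConcreteCategory.congr_hom (η.naturality g) x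
      rw [comp_apply, comp_apply] at this
      exact this
    have hxy : α.map g x = y := by
      apply (h j).injective
      rw [hnat]
      exact hg
    exact Quot.sound ⟨g, hxy.symm⟩
  -- the topology on the explicit colimit: a set is open iff all preimages are open
  have hopenβ : ∀ V : Set cβ.pt, (∀ k : J, IsOpen ((cβ.ι.app k) ⁻¹' V)) → IsOpen V := by
    intro V hV
    exact (TopCat.isOpen_iff_of_isColimit cβ hcβl V).2 hV
  -- embedding of f
  have hemb : Topology.IsEmbedding f := by
    refine ⟨⟨le_antisymm (continuous_iff_le_induced.mp f.hom.continuous) fun U hU => ?_⟩, hinj⟩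
    -- preimages of U in each α.obj j
    have hUj : ∀ j : J, IsOpen ((cα.ι.app j) ⁻¹' U) := fun j =>
      (cα.ι.app j).hom.continuous.isOpen_preimage U hU
    -- choose open sets W j in β.obj j pulling back to the preimages of U
    have hW : ∀ j : J, ∃ W : Set (β.obj j), IsOpen W ∧
        (η.app j) ⁻¹' W = (cα.ι.app j) ⁻¹' U := by
      intro j
      exact (h j).isInducing.isOpen_iff.mp (hUj j)
    choose W hWopen hWpre using hW
    -- the candidate open set in the colimit of β
    set V : Set cβ.pt := {c | ∃ (i : J) (w : β.obj i),
      w ∈ W i ∧ Quot.mk (Functor.ColimitTypeRel (β ⋙ forget TopCat)) ⟨i, w⟩ = c} with hVdef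
    refine isOpen_induced_iff.mpr ⟨V, hopenβ V ?_, ?_⟩
    · -- each preimage of V is open
      intro k
      have hset : (cβ.ι.app k) ⁻¹' V =
          ⋃ (i : J) (g : i ⟶ k), (β.map g) '' W i := by
        ext y
        simp only [Set.mem_preimage, Set.mem_iUnion, Set.mem_image, hVdef, Set.mem_setOf_eq,
          hι_mkβ]
        constructor
        · rintro ⟨i, w, hw, heq⟩
          obtain ⟨g, hg⟩ := stmt6_quot_eq (β ⋙ forget TopCat) heq
          exact ⟨i, g, w, hw, hg⟩
        · rintro ⟨i, g, w, hw, hg⟩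
          exact ⟨i, w, hw, Quot.sound ⟨g, hg.symm⟩⟩
      rw [hset]
      refine isOpen_iUnion fun i => isOpen_iUnion fun g => ?_
      have himg : (β.map g) '' W i = (β.map (Groupoid.inv g)) ⁻¹' W i := by
        ext z
        constructor
        · rintro ⟨w, hw, rfl⟩
          show β.map (Groupoid.inv g) (β.map g w) ∈ W i
          rw [stmt6_map_inv_map β g w]
          exact hw
        · intro hz
          exact ⟨β.map (Groupoid.inv g) z, hz, stmt6_map_map_inv β g z⟩
      rw [himg]
      exact (β.map (Groupoid.inv g)).hom.continuous.isOpen_preimage _ (hWopen i)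
    · -- f ⁻¹' V = U
      ext a
      obtain ⟨⟨k, x⟩, rfl⟩ := hrepα a
      simp only [Set.mem_preimage, hf, hVdef, Set.mem_setOf_eq]
      change (∃ i, ∃ w ∈ W i, (Quot.mk (Functor.ColimitTypeRel (β ⋙ forget TopCat)) ⟨i, w⟩ : cβ.pt)
        = f (Quot.mk (Functor.ColimitTypeRel (α ⋙ forget TopCat)) ⟨k, x⟩)) ↔ _
      rw [hf]
      constructor
      · rintro ⟨i, w, hw, heq⟩
        obtain ⟨g, hg⟩ := stmt6_quot_eq (β ⋙ forget TopCat) heq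
        -- w = η.app i (α.map (inv g) x)
        have hw' : w = η.app i (α.map (Groupoid.inv g) x) := by
          have hnat : η.app i (α.map (Groupoid.inv g) x)
              = β.map (Groupoid.inv g) (η.app k x) := by
            have := ConcreteCategory.congr_hom (η.naturality (Groupoid.inv g)) x
            rw [comp_apply, comp_apply] at this
            exact this
          rw [hnat, ← hg]
          exact (stmt6_map_inv_map β g w).symm
        have hmem : α.map (Groupoid.inv g) x ∈ (cα.ι.app i) ⁻¹' U := by
          rw [← hWpre i]
          show η.app i (α.map (Groupoid.inv g) x) ∈ W i
          rw [← hw']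
          exact hw
        have heqa : Quot.mk (Functor.ColimitTypeRel (α ⋙ forget TopCat))
            ⟨i, α.map (Groupoid.inv g) x⟩
            = Quot.mk (Functor.ColimitTypeRel (α ⋙ forget TopCat)) ⟨k, x⟩ :=
          Quot.sound ⟨g, (stmt6_map_map_inv α g x).symm⟩
        have := hmem
        rw [Set.mem_preimage, hι_mkα, heqa] at this
        exact this
      · intro ha
        refine ⟨k, η.app k x, ?_, rfl⟩
        have : x ∈ (cα.ι.app k) ⁻¹' U := by
          rw [Set.mem_preimage, hι_mkα]; exact ha
        rw [← hWpre k] at this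
        exact this
  -- transport the embedding along the isomorphisms with the chosen colimits
  have hsquare : (colimMap η : colimit α ⟶ colimit β) = eα.hom ≫ f ≫ eβ.inv := by
    apply colimit.hom_ext
    intro j
    have hinvβ : cβ.ι.app j ≫ (colimit.isoColimitCocone ⟨cβ, hcβl⟩).inv = colimit.ι β j :=
      colimit.isoColimitCocone_ι_inv ⟨cβ, hcβl⟩ j
    simp only [heα, heβ, hfdef, ι_colimMap, colimit.isoColimitCocone_ι_hom_assoc,
      IsColimit.ι_map_assoc]
    rw [hinvβ]
  rw [hsquare]
  have h1 : Topology.IsEmbedding (eα.hom) := (TopCat.homeoOfIso eα).isEmbedding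
  have h2 : Topology.IsEmbedding (eβ.inv) := (TopCat.homeoOfIso eβ).symm.isEmbedding
  have : ⇑(eα.hom ≫ f ≫ eβ.inv) = ⇑(eβ.inv) ∘ ⇑f ∘ ⇑(eα.hom) := by
    ext a; simp
  rw [this]
  exact (h2.comp hemb).comp h1
end
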